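/- π/4 = ∑_{j≥0} (1/2^{j+1}) · ∏_{i=1}^{j} (2i)/(2i+1), where the empty product (j = 0) equals 1. -/

import Mathlib

open Real MeasureTheory Finset intervalIntegral

lemma prod_icc_eq_range (j : ℕ) :
    ∏ i ∈ Finset.Icc 1 j, (2 * i : ℝ) / (2 * i + 1)
      = ∏ i ∈ Finset.range j, (2 * (i : ℝ) + 2) / (2 * i + 3) := by
  induction j with
  | zero => simp
  | succ k ih =>
      rw [Finset.prod_Icc_succ_top (Nat.one_le_iff_ne_zero.mpr (Nat.succ_ne_zero k)),
        Finset.prod_range_succ, ih]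
      push_cast
      norm_num
      left
      rw [div_eq_div_iff (by positivity) (by positivity)]
      ring

lemma tsum_geom_sin (x : ℝ) :
    ∑' j : ℕ, (1 / 2 ^ (j + 2) : ℝ) * Real.sin x ^ (2 * j + 1)
      = Real.sin x / (2 * (1 + Real.cos x ^ 2)) := by
  have hterm : ∀ j : ℕ, (1 / 2 ^ (j + 2) : ℝ) * Real.sin x ^ (2 * j + 1)
      = (Real.sin x / 4) * (Real.sin x ^ 2 / 2) ^ j := by
    intro j
    rw [pow_add (Real.sin x) (2*j) 1, pow_mul (Real.sin x), pow_one]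
    rw [div_pow, pow_add]
    ring
  have hr : |Real.sin x ^ 2 / 2| < 1 := by
    rw [abs_div, abs_pow, abs_of_nonneg (by norm_num : (0:ℝ) ≤ 2)]
    have := abs_sin_le_one x
    nlinarith [abs_nonneg (Real.sin x)]
  calc ∑' j : ℕ, (1 / 2 ^ (j + 2) : ℝ) * Real.sin x ^ (2 * j + 1)
      = ∑' j : ℕ, (Real.sin x / 4) * (Real.sin x ^ 2 / 2) ^ j := by
        exact tsum_congr hterm
    _ = (Real.sin x / 4) * (1 - Real.sin x ^ 2 / 2)⁻¹ := by
        rw [tsum_mul_left, tsum_geometric_of_abs_lt_one hr]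
    _ = Real.sin x / (2 * (1 + Real.cos x ^ 2)) := by
        have hs : Real.sin x ^ 2 = 1 - Real.cos x ^ 2 := Real.sin_sq x
        have hc : (0:ℝ) < 1 + Real.cos x ^ 2 := by positivity
        have h2 : (1 - (1 - Real.cos x^2)/2) = (1+Real.cos x^2)/2 := by ring
        rw [hs, h2, inv_div, div_mul_div_comm, div_eq_div_iff (by positivity) (by positivity)]
        ring

lemma integral_final :
    ∫ x in (0:ℝ)..π, Real.sin x / (2 * (1 + Real.cos x ^ 2)) = π / 4 := by
  have h : ∀ x ∈ Set.uIcc (0:ℝ) π,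
      HasDerivAt (fun y => -(Real.arctan (Real.cos y)) / 2)
        (Real.sin x / (2 * (1 + Real.cos x ^ 2))) x := by
    intro x _
    have h1 : HasDerivAt (fun y => Real.arctan (Real.cos y))
        ((1 / (1 + Real.cos x ^ 2)) * (-Real.sin x)) x :=
      (Real.hasDerivAt_arctan (Real.cos x)).comp x (Real.hasDerivAt_cos x)
    have h2 := (h1.neg).div_const 2
    refine h2.congr_deriv ?_
    have hc : (0:ℝ) < 1 + Real.cos x ^ 2 := by positivity
    field_simp
  have hcont : ContinuousOn (fun x => Real.sin x / (2 * (1 + Real.cos x ^ 2)))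
      (Set.uIcc (0:ℝ) π) := by
    apply ContinuousOn.div
    · exact Real.continuous_sin.continuousOn
    · exact (continuous_const.mul ((continuous_const.add
        ((Real.continuous_cos).pow 2)))).continuousOn
    · intro x _
      positivity
  rw [intervalIntegral.integral_eq_sub_of_hasDerivAt h (hcont.intervalIntegrable)]
  simp [Real.arctan_one, Real.arctan_neg]
  ring

theorem stmt_6 :
    Real.pi / 4 =
      ∑' j : ℕ, (1 / 2 ^ (j + 1)) * ∏ i ∈ Finset.Icc 1 j, (2 * i : ℝ) / (2 * i + 1) := by
  have hπ : (0:ℝ) ≤ π := Real.pi_nonneg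
  -- each term is an integral
  have hterm : ∀ j : ℕ,
      (1 / 2 ^ (j + 1)) * ∏ i ∈ Finset.Icc 1 j, (2 * i : ℝ) / (2 * i + 1)
        = ∫ x in Set.Ioc (0:ℝ) π, (1 / 2 ^ (j + 2) : ℝ) * Real.sin x ^ (2 * j + 1) := by
    intro j
    rw [← intervalIntegral.integral_of_le hπ, intervalIntegral.integral_const_mul,
      integral_sin_pow_odd, prod_icc_eq_range]
    rw [pow_succ (2:ℝ) (j+1)]
    ring
  have hInt : ∀ j : ℕ, Integrable
      (fun x => (1 / 2 ^ (j + 2) : ℝ) * Real.sin x ^ (2 * j + 1))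
      (volume.restrict (Set.Ioc (0:ℝ) π)) := by
    intro j
    exact (Continuous.integrableOn_Ioc (by continuity))
  have hSum : Summable fun j : ℕ =>
      ∫ x in Set.Ioc (0:ℝ) π, ‖(1 / 2 ^ (j + 2) : ℝ) * Real.sin x ^ (2 * j + 1)‖ := by
    apply Summable.of_nonneg_of_le
      (fun j => integral_nonneg (fun x => norm_nonneg _))
      (fun j => ?_) (Summable.mul_right π (summable_geometric_two.mul_left (1/4)))
    have hb : ∀ x ∈ Set.Ioc (0:ℝ) π,
        ‖(1 / 2 ^ (j + 2) : ℝ) * Real.sin x ^ (2 * j + 1)‖ ≤ (1/4) * (1/2)^j := by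
      intro x _
      rw [norm_mul, norm_pow]
      have h1 : ‖(1 / 2 ^ (j + 2) : ℝ)‖ = (1/4) * (1/2)^j := by
        rw [Real.norm_eq_abs, abs_of_pos (by positivity)]
        rw [pow_add]
        rw [one_div_pow]
        ring
      rw [h1]
      have h2 : ‖Real.sin x‖ ^ (2*j+1) ≤ 1 := by
        apply pow_le_one₀ (norm_nonneg _)
        rw [Real.norm_eq_abs]; exact Real.abs_sin_le_one x
      nlinarith [pow_nonneg (norm_nonneg (Real.sin x)) (2*j+1),
        (by positivity : (0:ℝ) ≤ (1/4) * (1/2)^j)]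
    calc ∫ x in Set.Ioc (0:ℝ) π, ‖(1 / 2 ^ (j + 2) : ℝ) * Real.sin x ^ (2 * j + 1)‖
        ≤ ∫ _x in Set.Ioc (0:ℝ) π, (1/4) * (1/2:ℝ)^j := by
          apply setIntegral_mono_on (hInt j).norm (integrableOn_const (by simp [Real.volume_Ioc])) measurableSet_Ioc hb
      _ ≤ (1/4) * (1/2)^j * π := by
          rw [setIntegral_const]
          simp [Real.volume_Ioc, ENNReal.toReal_ofReal hπ]
          rw [max_eq_left hπ]; linarith [mul_comm π (4⁻¹ * (2 ^ j : ℝ)⁻¹)]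
  calc Real.pi / 4
      = ∫ x in (0:ℝ)..π, Real.sin x / (2 * (1 + Real.cos x ^ 2)) := integral_final.symm
    _ = ∫ x in Set.Ioc (0:ℝ) π,
          ∑' j : ℕ, (1 / 2 ^ (j + 2) : ℝ) * Real.sin x ^ (2 * j + 1) := by
        rw [intervalIntegral.integral_of_le hπ]
        exact setIntegral_congr_fun measurableSet_Ioc (fun x _ => (tsum_geom_sin x).symm)
    _ = ∑' j : ℕ, ∫ x in Set.Ioc (0:ℝ) π,
          (1 / 2 ^ (j + 2) : ℝ) * Real.sin x ^ (2 * j + 1) :=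
        (MeasureTheory.integral_tsum_of_summable_integral_norm hInt hSum).symm
    _ = ∑' j : ℕ, (1 / 2 ^ (j + 1)) * ∏ i ∈ Finset.Icc 1 j, (2 * i : ℝ) / (2 * i + 1) :=
        tsum_congr fun j => (hterm j).symm
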